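/- The unique formal power series A ∈ ℚ[[t]] with zero constant term satisfying A^n - A + t = 0 (for fixed n ≥ 2) is A(t) = Σ_{m≥0} binom(mn, m)·t^{m(n-1)+1}/(m(n-1)+1). -/

import Mathlib

open PowerSeries Finset

private lemma s4_constCoeff_geom {n : ℕ} (hn : 2 ≤ n) {f g : PowerSeries ℚ}
    (hf : constantCoeff f = 0) (hg : constantCoeff g = 0) :
    constantCoeff (∑ i ∈ range n, f ^ i * g ^ (n - 1 - i)) = 0 := by
  rw [map_sum]
  refine Finset.sum_eq_zero fun i hi => ?_
  rw [map_mul, map_pow, map_pow, hf, hg]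
  have : n - 1 - i ≠ 0 ∨ i ≠ 0 := by omega
  rcases this with h | h
  · rw [zero_pow h, mul_zero]
  · rw [zero_pow h, zero_mul]

private lemma s4_coeff_pow_eq {n k : ℕ} (hn : 2 ≤ n) {f g : PowerSeries ℚ}
    (hf : constantCoeff f = 0) (hg : constantCoeff g = 0)
    (h : ∀ j < k, coeff j f = coeff j g) :
    coeff k (f ^ n) = coeff k (g ^ n) := by
  have h1 : (X : PowerSeries ℚ) ^ k ∣ f - g := by
    rw [X_pow_dvd_iff]
    intro m hm
    rw [map_sub, h m hm, sub_self]
  have h2 : (X : PowerSeries ℚ) ∣ ∑ i ∈ range n, f ^ i * g ^ (n - 1 - i) := by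
    rw [X_dvd_iff]
    exact s4_constCoeff_geom hn hf hg
  have h3 : (X : PowerSeries ℚ) ^ (k + 1) ∣ f ^ n - g ^ n := by
    rw [← geom_sum₂_mul, pow_succ']
    exact mul_dvd_mul h2 h1
  have := (X_pow_dvd_iff.mp h3) k (by omega)
  rw [map_sub, sub_eq_zero] at this
  exact this

private lemma s4_unique {n : ℕ} (hn : 2 ≤ n) {A B : PowerSeries ℚ}
    (hA0 : constantCoeff A = 0) (hA : A ^ n - A + X = 0)
    (hB0 : constantCoeff B = 0) (hB : B ^ n - B + X = 0) : A = B := by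
  have key : (A - B) * (1 - ∑ i ∈ range n, A ^ i * B ^ (n - 1 - i)) = 0 := by
    have h1 : (∑ i ∈ range n, A ^ i * B ^ (n - 1 - i)) * (A - B) = A ^ n - B ^ n :=
      geom_sum₂_mul A B n
    have h2 : A ^ n - B ^ n = A - B := by linear_combination hA - hB
    linear_combination -h1 - h2
  rcases mul_eq_zero.mp key with h | h
  · exact sub_eq_zero.mp h
  · exfalso
    have := congrArg constantCoeff h
    rw [map_sub, map_one, s4_constCoeff_geom hn hA0 hB0, map_zero] at this
    norm_num at this

noncomputable def s4_seq (n : ℕ) : ℕ → ℚ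
  | k => if k = 0 then 0 else (if k = 1 then 1 else 0) +
      coeff k ((PowerSeries.mk fun j => if h : j < k then s4_seq n j else 0) ^ n)
  termination_by k => k
  decreasing_by exact h

private lemma s4_exists {n : ℕ} (hn : 2 ≤ n) :
    ∃ A : PowerSeries ℚ, constantCoeff A = 0 ∧ A ^ n - A + X = 0 := by
  set A : PowerSeries ℚ := PowerSeries.mk (s4_seq n) with hA
  have h0 : constantCoeff A = 0 := by
    rw [hA, ← coeff_zero_eq_constantCoeff_apply, coeff_mk, s4_seq]
    simp
  refine ⟨A, h0, ?_⟩
  have key : ∀ k, coeff k A = coeff k (A ^ n + X) := by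
    intro k
    rcases Nat.eq_zero_or_pos k with hk | hk
    · subst hk
      rw [coeff_zero_eq_constantCoeff_apply, coeff_zero_eq_constantCoeff_apply, h0,
        map_add, map_pow, h0, constantCoeff_X, zero_pow (by omega), add_zero]
    · have hT0 : constantCoeff (PowerSeries.mk fun j => if h : j < k then s4_seq n j else 0) = 0 := by
        rw [← coeff_zero_eq_constantCoeff_apply, coeff_mk, dif_pos hk, s4_seq]
        simp
      have hagree : ∀ j < k, coeff j (PowerSeries.mk fun j => if h : j < k then s4_seq n j else 0)
          = coeff j A := by
        intro j hj
        rw [coeff_mk, dif_pos hj, hA, coeff_mk]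
      have := s4_coeff_pow_eq hn hT0 h0 hagree
      rw [hA, coeff_mk, map_add, ← this, coeff_X, s4_seq]
      rw [if_neg (by omega)]
      ring
  have : A = A ^ n + X := PowerSeries.ext key
  linear_combination -this

section
variable {n : ℕ} {A : PowerSeries ℚ}

private lemma s4_base (hn : 2 ≤ n) (hE : A ^ n = A - X) :
    (n : PowerSeries ℚ) * X * (PowerSeries.derivative ℚ A) =
      ((n : PowerSeries ℚ) - 1) * A * (PowerSeries.derivative ℚ A) + A := by
  set D := PowerSeries.derivative ℚ
  have hD : (n : PowerSeries ℚ) * A ^ (n - 1) * D A = D A - 1 := by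
    have h := congrArg D hE
    rw [Derivation.leibniz_pow, map_sub, PowerSeries.derivative_X] at h
    rw [smul_eq_mul, nsmul_eq_mul, ← mul_assoc] at h
    exact h
  have hpow : A ^ (n - 1) * A = A - X := by
    rw [← pow_succ, Nat.sub_add_cancel (by omega), hE]
  linear_combination (-A) * hD + ((n : PowerSeries ℚ) * D A) * hpow
end

section
variable {n : ℕ} {A : PowerSeries ℚ}

private lemma s4_Srel (hn : 2 ≤ n) (hE : A ^ n = A - X) (j : ℕ) :
    ((j : PowerSeries ℚ) + 2) * ((n : PowerSeries ℚ) * X * (PowerSeries.derivative ℚ (A ^ (j+1)))) =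
      ((n : PowerSeries ℚ) - 1) * ((j : PowerSeries ℚ) + 1) * (PowerSeries.derivative ℚ (A ^ (j+2)))
        + ((j : PowerSeries ℚ) + 1) * ((j : PowerSeries ℚ) + 2) * A ^ (j+1) := by
  have hbase := s4_base hn hE
  rw [Derivation.leibniz_pow, Derivation.leibniz_pow]
  simp only [Nat.add_sub_cancel, smul_eq_mul, nsmul_eq_mul]
  push_cast
  linear_combination (((j : PowerSeries ℚ) + 1) * ((j : PowerSeries ℚ) + 2) * A ^ j) * hbase

private lemma s4_extract (hn : 2 ≤ n) (hE : A ^ n = A - X) (K j : ℕ) :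
    ((j : ℚ) + 2) * (n : ℚ) * ((K : ℚ) + j + 1) * coeff (K + j + 1) (A ^ (j + 1)) =
      ((n : ℚ) - 1) * ((j : ℚ) + 1) * ((K : ℚ) + j + 2) * coeff (K + j + 2) (A ^ (j + 2))
        + ((j : ℚ) + 1) * ((j : ℚ) + 2) * coeff (K + j + 1) (A ^ (j + 1)) := by
  have h := congrArg (coeff (K + j + 1)) (s4_Srel hn hE j)
  have e1 : ((j : PowerSeries ℚ) + 2) = C ((j : ℚ) + 2) := by simp [map_ofNat]
  have e2 : ((n : PowerSeries ℚ)) = C ((n : ℚ)) := by simp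
  have e3 : ((n : PowerSeries ℚ) - 1) * ((j : PowerSeries ℚ) + 1) = C (((n:ℚ) - 1) * ((j:ℚ)+1)) := by
    simp
  have e4 : ((j : PowerSeries ℚ) + 1) * ((j : PowerSeries ℚ) + 2) = C (((j:ℚ)+1) * ((j:ℚ)+2)) := by
    simp [map_ofNat]
  rw [e3, e4, e1, e2] at h
  rw [show ∀ (f : PowerSeries ℚ), C ((j:ℚ)+2) * (C (n:ℚ) * X * f) =
      C ((j:ℚ)+2) * C (n:ℚ) * (X * f) from fun f => by ring, ← map_mul] at h
  rw [map_add, coeff_C_mul, coeff_C_mul, coeff_C_mul] at h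
  rw [show K + j + 1 = (K + j) + 1 from rfl, coeff_succ_X_mul, coeff_derivative,
    coeff_derivative] at h
  push_cast at h
  linear_combination h
end

noncomputable def s4_g (n K s : ℕ) : ℚ :=
  ((n : ℚ) * ((K : ℚ) + 1 + s) - ((s : ℚ) + 1)) / (((n : ℚ) - 1) * ((K : ℚ) + s + 2))

section
variable {n : ℕ} {A : PowerSeries ℚ}

private lemma s4_Q (hn : 2 ≤ n) (hE : A ^ n = A - X) (K : ℕ) : ∀ j : ℕ,
    coeff (K + j + 1) (A ^ (j + 1)) =
      ((j : ℚ) + 1) * (∏ s ∈ range j, s4_g n K s) * coeff (K + 1) A := by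
  intro j
  induction j with
  | zero => simp
  | succ j ih =>
    have hex := s4_extract hn hE K j
    rw [ih] at hex
    have hne1 : ((n : ℚ) - 1) ≠ 0 := by
      have : (2 : ℚ) ≤ (n : ℚ) := by exact_mod_cast hn
      linarith
    have hne2 : ((K : ℚ) + j + 2) ≠ 0 := by positivity
    have hne3 : ((j : ℚ) + 1) ≠ 0 := by positivity
    have hidx : K + (j + 1) + 1 = K + j + 2 := by omega
    rw [hidx, show j + 1 + 1 = j + 2 from rfl, prod_range_succ]
    rw [show coeff (K + j + 2) (A ^ (j + 2)) =
        (((j:ℚ)+2) * (n:ℚ) * ((K:ℚ)+j+1) * (((j:ℚ)+1) * (∏ s ∈ range j, s4_g n K s) * coeff (K+1) A)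
          - ((j:ℚ)+1) * ((j:ℚ)+2) * (((j:ℚ)+1) * (∏ s ∈ range j, s4_g n K s) * coeff (K+1) A))
          / (((n:ℚ) - 1) * ((j:ℚ)+1) * ((K:ℚ)+j+2)) from by
      rw [eq_div_iff (mul_ne_zero (mul_ne_zero hne1 hne3) hne2)]
      linear_combination -hex]
    rw [s4_g]
    push_cast
    field_simp
    ring
end

private lemma s4_chain {n : ℕ} {A : PowerSeries ℚ} (hn : 2 ≤ n) (hE : A ^ n = A - X) (K : ℕ) :
    coeff (K + n) A =
      (n : ℚ) * (∏ s ∈ range (n - 1), s4_g n K s) * coeff (K + 1) A := by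
  have hq := s4_Q hn hE K (n - 1)
  rw [show K + (n - 1) + 1 = K + n from by omega, show (n - 1) + 1 = n from by omega] at hq
  have hAn : coeff (K + n) (A ^ n) = coeff (K + n) A := by
    rw [hE, map_sub, coeff_X, if_neg (by omega), sub_zero]
  rw [← hAn, hq]
  have : (((n - 1 : ℕ) : ℚ) + 1) = (n : ℚ) := by
    have : ((n - 1 : ℕ) : ℚ) = (n : ℚ) - 1 := by
      push_cast [Nat.cast_sub (by omega : 1 ≤ n)]; ring
    rw [this]; ring
  rw [this]

noncomputable def s4_c (n : ℕ) : ℕ → ℚ := fun k =>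
  if (n - 1) ∣ (k - 1) ∧ k ≠ 0 then
    (Nat.choose ((k - 1) / (n - 1) * n) ((k - 1) / (n - 1)) : ℚ) / k
  else 0

private lemma s4_prod_fact (b t : ℕ) :
    (b.factorial : ℚ) * ∏ s ∈ range t, ((b + s + 1 : ℕ) : ℚ) = ((b + t).factorial : ℚ) := by
  induction t with
  | zero => simp
  | succ t ih =>
    rw [prod_range_succ, ← mul_assoc, ih, show b + (t+1) = (b + t) + 1 from rfl,
      Nat.factorial_succ]
    push_cast
    ring

private lemma s4_ID (p q : ℕ) (hp : 1 ≤ p) :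
    ((((q+1) * (p+1)).choose (q+1) : ℕ) : ℚ) / ((q*p : ℚ) + p + 1) =
      ((p : ℚ) + 1) * ((∏ s ∈ range p, ((q*p + q + s + 1 : ℕ) : ℚ)) /
          (∏ s ∈ range p, ((q*p + s + 2 : ℕ) : ℚ))) *
        (((q * (p+1)).choose q : ℕ) : ℚ) / ((q*p : ℚ) + 1) := by
  have e1 : (q+1) * (p+1) = q*p + q + p + 1 := by ring
  have e2 : q * (p+1) = q*p + q := by ring
  rw [e1, e2]
  have hc1 : (((q*p + q + p + 1).choose (q+1) : ℕ) : ℚ) =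
      ((q*p+q+p+1).factorial : ℚ) / (((q+1).factorial : ℚ) * ((q*p+p).factorial : ℚ)) := by
    rw [Nat.cast_choose ℚ (by omega : q + 1 ≤ q*p + q + p + 1)]
    rw [show q*p + q + p + 1 - (q+1) = q*p + p from by omega]
  have hc2 : (((q*p + q).choose q : ℕ) : ℚ) =
      ((q*p+q).factorial : ℚ) / ((q.factorial : ℚ) * ((q*p).factorial : ℚ)) := by
    rw [Nat.cast_choose ℚ (by omega : q ≤ q*p + q)]
    rw [show q*p + q - q = q*p from by omega]
  have hp1 : (∏ s ∈ range p, ((q*p + q + s + 1 : ℕ) : ℚ)) =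
      ((q*p+q+p).factorial : ℚ) / ((q*p+q).factorial : ℚ) := by
    rw [eq_div_iff (by exact_mod_cast (Nat.factorial_pos _).ne')]
    rw [mul_comm, s4_prod_fact]
  have hp2 : (∏ s ∈ range p, ((q*p + s + 2 : ℕ) : ℚ)) =
      ((q*p+p+1).factorial : ℚ) / ((q*p+1).factorial : ℚ) := by
    rw [eq_div_iff (by exact_mod_cast (Nat.factorial_pos _).ne')]
    rw [mul_comm]
    have hss : ∀ s, q*p + s + 2 = (q*p+1) + s + 1 := fun s => by omega
    simp only [hss]
    rw [s4_prod_fact, show q*p+1+p = q*p+p+1 from by omega]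
  rw [hc1, hc2, hp1, hp2]
  rw [show (q*p+q+p+1).factorial = (q*p+q+p+1) * (q*p+q+p).factorial from Nat.factorial_succ _,
    show (q+1).factorial = (q+1) * q.factorial from Nat.factorial_succ _,
    show (q*p+p+1).factorial = (q*p+p+1) * (q*p+p).factorial from Nat.factorial_succ _,
    show (q*p+1).factorial = (q*p+1) * (q*p).factorial from Nat.factorial_succ _]
  have f1 : ((q*p+q+p).factorial : ℚ) ≠ 0 := by exact_mod_cast (Nat.factorial_pos _).ne'
  have f2 : ((q).factorial : ℚ) ≠ 0 := by exact_mod_cast (Nat.factorial_pos _).ne'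
  have f3 : ((q*p+p).factorial : ℚ) ≠ 0 := by exact_mod_cast (Nat.factorial_pos _).ne'
  have f4 : ((q*p).factorial : ℚ) ≠ 0 := by exact_mod_cast (Nat.factorial_pos _).ne'
  have f5 : ((q*p+q).factorial : ℚ) ≠ 0 := by exact_mod_cast (Nat.factorial_pos _).ne'
  have g1 : ((q*p : ℚ) + p + 1) ≠ 0 := by positivity
  have g2 : ((q*p : ℚ) + 1) ≠ 0 := by positivity
  have g3 : ((q : ℚ) + 1) ≠ 0 := by positivity
  push_cast
  field_simp
  ring

private lemma s4_crec {n : ℕ} (hn : 2 ≤ n) (K : ℕ) :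
    s4_c n (K + n) = (n : ℚ) * (∏ s ∈ range (n - 1), s4_g n K s) * s4_c n (K + 1) := by
  obtain ⟨p, rfl⟩ : ∃ p, n = p + 1 := ⟨n - 1, by omega⟩
  have hp : 1 ≤ p := by omega
  have hsub : p + 1 - 1 = p := rfl
  by_cases hdvd : p ∣ K
  · obtain ⟨q, rfl⟩ := hdvd
    have hK1 : s4_c (p+1) (p*q + 1) = ((q * (p+1)).choose q : ℚ) / ((p*q : ℚ) + 1) := by
      rw [s4_c]
      rw [if_pos ⟨by simp [hsub], by omega⟩]
      rw [hsub, show p*q + 1 - 1 = p*q from rfl, Nat.mul_div_cancel_left q (by omega : 0 < p)]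
      push_cast
      ring_nf
    have hKn : s4_c (p+1) (p*q + (p+1)) = (((q+1) * (p+1)).choose (q+1) : ℚ) / ((p*q : ℚ) + p + 1) := by
      rw [s4_c]
      have hd : p ∣ (p*q + (p+1) - 1) := ⟨q + 1, by ring_nf; omega⟩
      rw [if_pos ⟨by simpa [hsub] using hd, by omega⟩]
      rw [hsub, show p*q + (p+1) - 1 = p*(q+1) from by ring_nf; omega,
        Nat.mul_div_cancel_left (q+1) (by omega : 0 < p)]
      push_cast
      ring_nf
    have hg : ∀ s, s4_g (p+1) (p*q) s = ((q*p + q + s + 1 : ℕ) : ℚ) / ((q*p + s + 2 : ℕ) : ℚ) := by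
      intro s
      rw [s4_g]
      have hden : (((p+1 : ℕ) : ℚ) - 1) * (((p*q : ℕ) : ℚ) + (s:ℚ) + 2) ≠ 0 := by
        apply mul_ne_zero
        · push_cast
          have : (1:ℚ) ≤ (p:ℚ) := by exact_mod_cast hp
          intro hcon
          linarith
        · positivity
      have hden2 : ((q*p + s + 2 : ℕ) : ℚ) ≠ 0 := by positivity
      rw [div_eq_div_iff hden hden2]
      push_cast
      ring
    rw [hsub, hKn, hK1]
    simp only [hg]
    rw [prod_div_distrib]
    have hid := s4_ID p q hp
    push_cast at hid ⊢
    linear_combination hid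
  · have h1 : s4_c (p+1) (K + 1) = 0 := by
      rw [s4_c, if_neg]
      rintro ⟨h, -⟩
      rw [hsub, show K + 1 - 1 = K from rfl] at h
      exact hdvd h
    have h2 : s4_c (p+1) (K + (p+1)) = 0 := by
      rw [s4_c, if_neg]
      rintro ⟨h, -⟩
      rw [hsub, show K + (p+1) - 1 = K + p from by omega] at h
      have h2 := Nat.dvd_sub h (dvd_refl p)
      exact hdvd (by simpa using h2)
    rw [h1, h2, mul_zero]

private lemma s4_c_small {n : ℕ} (hn : 2 ≤ n) {k : ℕ} (hk : k < n) :
    s4_c n k = if k = 1 then 1 else 0 := by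
  rcases Nat.eq_zero_or_pos k with rfl | hk0
  · rw [s4_c, if_neg (by simp)]
    simp
  · rcases Nat.lt_or_ge k 2 with hk2 | hk2
    · have : k = 1 := by omega
      subst this
      rw [s4_c, if_pos ⟨⟨0, by simp⟩, by omega⟩]
      simp
    · rw [s4_c, if_neg, if_neg (by omega)]
      rintro ⟨h, -⟩
      have := Nat.le_of_dvd (by omega) h
      omega

private lemma s4_coeff_small {n : ℕ} {A : PowerSeries ℚ} (hn : 2 ≤ n)
    (h0 : constantCoeff A = 0) (hE : A ^ n = A - X) {k : ℕ} (hk : k < n) :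
    coeff k A = if k = 1 then 1 else 0 := by
  have hdvd : (X : PowerSeries ℚ) ^ n ∣ A ^ n := pow_dvd_pow_of_dvd (X_dvd_iff.mpr h0) n
  have hz : coeff k (A ^ n) = 0 := (X_pow_dvd_iff.mp hdvd) k hk
  have : coeff k (A ^ n) = coeff k A - coeff k X := by rw [hE, map_sub]
  rw [hz] at this
  rw [coeff_X] at this
  rcases eq_or_ne k 1 with rfl | hne
  · simp only [if_pos rfl] at this ⊢
    linarith
  · simp only [if_neg hne] at this ⊢
    linarith

private lemma s4_main {n : ℕ} {A : PowerSeries ℚ} (hn : 2 ≤ n)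
    (h0 : constantCoeff A = 0) (heq : A ^ n - A + X = 0) :
    ∀ k, coeff k A = s4_c n k := by
  have hE : A ^ n = A - X := by linear_combination heq
  intro k
  induction k using Nat.strong_induction_on with
  | _ k ih =>
    rcases Nat.lt_or_ge k n with hk | hk
    · rw [s4_coeff_small hn h0 hE hk, s4_c_small hn hk]
    · obtain ⟨K, rfl⟩ : ∃ K, k = K + n := ⟨k - n, by omega⟩
      rw [s4_chain hn hE K, ih (K + 1) (by omega), s4_crec hn K]

theorem stmt_4 (n : ℕ) (hn : 2 ≤ n) :
    (∃! A : PowerSeries ℚ, PowerSeries.constantCoeff A = 0 ∧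
        A ^ n - A + PowerSeries.X = 0) ∧
    ∀ A : PowerSeries ℚ, PowerSeries.constantCoeff A = 0 →
      A ^ n - A + PowerSeries.X = 0 →
      A = PowerSeries.mk (fun k =>
        if (n - 1) ∣ (k - 1) ∧ k ≠ 0 then
          (Nat.choose ((k - 1) / (n - 1) * n) ((k - 1) / (n - 1)) : ℚ) / k
        else 0) := by
  obtain ⟨A, hA0, hAeq⟩ := s4_exists hn
  constructor
  · exact ⟨A, ⟨hA0, hAeq⟩, fun B hB => s4_unique hn hB.1 hB.2 hA0 hAeq⟩
  · intro B hB0 hBeq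
    exact PowerSeries.ext fun k => by
      rw [coeff_mk]
      exact s4_main hn hB0 hBeq k
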